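/- Every signed theta graph admits a homomorphism to C₃*, where C₃* is the positive triangle with a negative loop on each vertex. -/

import Mathlib

/-- A signed graph: a vertex type with a symmetric positive-edge relation and a
symmetric negative-edge relation (loops and "digons" are allowed). -/
structure SignedGraph (V : Type*) where
  pos : V → V → Prop
  neg : V → V → Prop
  pos_symm : Symmetric pos
  neg_symm : Symmetric neg

namespace SignedGraph

variable {V W : Type*}

/-- Switching at the vertex set `{v | s v = true}`: signs of edges with exactly one
endpoint in the set are flipped; loops and edges with both or no endpoints in the
set are unchanged. -/
def switch (G : SignedGraph V) (s : V → Bool) : SignedGraph V where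
  pos u v := if s u = s v then G.pos u v else G.neg u v
  neg u v := if s u = s v then G.neg u v else G.pos u v
  pos_symm := by
    intro u v h
    by_cases hs : s u = s v
    · rw [if_pos hs] at h; rw [if_pos hs.symm]; exact G.pos_symm h
    · rw [if_neg hs] at h; rw [if_neg (fun e => hs e.symm)]; exact G.neg_symm h
  neg_symm := by
    intro u v h
    by_cases hs : s u = s v
    · rw [if_pos hs] at h; rw [if_pos hs.symm]; exact G.neg_symm h
    · rw [if_neg hs] at h; rw [if_neg (fun e => hs e.symm)]; exact G.pos_symm h

/-- An edge-sign preserving homomorphism maps positive edges to positive edges and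
negative edges to negative edges. -/
def IsESPHom (G : SignedGraph V) (H : SignedGraph W) (φ : V → W) : Prop :=
  (∀ u v, G.pos u v → H.pos (φ u) (φ v)) ∧ (∀ u v, G.neg u v → H.neg (φ u) (φ v))

/-- A signed graph admits a homomorphism to another iff some switching of it admits
an edge-sign preserving homomorphism (this preserves adjacency and signs of closed
walks). -/
def HasHomTo (G : SignedGraph V) (H : SignedGraph W) : Prop :=
  ∃ (s : V → Bool) (φ : V → W), IsESPHom (G.switch s) H φ

/-- `H` is a subgraph of `G` (on the same vertex set). -/
def IsSubgraph (H G : SignedGraph V) : Prop :=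
  (∀ u v, H.pos u v → G.pos u v) ∧ (∀ u v, H.neg u v → G.neg u v)

/-- The number of edges of a finite signed graph (unordered pairs, each sign
counted separately). -/
noncomputable def edgeCount (G : SignedGraph V) : ℕ :=
  (Sym2.fromRel (⟨fun _ _ h => G.pos_symm h⟩ : Std.Symm G.pos)).ncard +
    (Sym2.fromRel (⟨fun _ _ h => G.neg_symm h⟩ : Std.Symm G.neg)).ncard

/-- The degree of a vertex: the number of its neighbours (via an edge of either sign). -/
noncomputable def degree (G : SignedGraph V) (v : V) : ℕ :=
  {u | G.pos v u ∨ G.neg v u}.ncard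

/-- The underlying simple graph of a signed graph (loops discarded). -/
def underlying (G : SignedGraph V) : SimpleGraph V :=
  SimpleGraph.fromRel (fun u v => G.pos u v ∨ G.neg u v)

end SignedGraph

/-- `C₃*`: the all-positive triangle with a negative loop at each vertex. -/
def C3star : SignedGraph (Fin 3) where
  pos u v := u ≠ v
  neg u v := u = v
  pos_symm := fun _ _ h => h.symm
  neg_symm := fun _ _ h => h.symm

/-- A signed graph is `C₃*`-critical: it has no digon and no positive loop (the
girth conditions of Definition 2.7), admits no homomorphism to `C₃*`, but every
proper subgraph does. -/
def IsC3Critical {V : Type*} (G : SignedGraph V) : Prop :=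
  (∀ u v, ¬ (G.pos u v ∧ G.neg u v)) ∧
  (∀ v, ¬ G.pos v v) ∧
  ¬ G.HasHomTo C3star ∧
  ∀ H : SignedGraph V, H.IsSubgraph G → H ≠ G → H.HasHomTo C3star

/-- The relation `E` is the edge relation of a theta graph: a simple graph that is
the union of three internally disjoint paths (of lengths `a, b, c ≥ 1`, at most one
of which is a single edge) sharing the same two distinct end vertices. -/
def IsThetaGraph {V : Type*} (E : V → V → Prop) : Prop :=
  ∃ (a b c : ℕ) (p q r : ℕ → V),
    1 ≤ a ∧ 1 ≤ b ∧ 1 ≤ c ∧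
    (a = 1 → b ≠ 1) ∧ (a = 1 → c ≠ 1) ∧ (b = 1 → c ≠ 1) ∧
    p 0 = q 0 ∧ q 0 = r 0 ∧ p a = q b ∧ q b = r c ∧ p 0 ≠ p a ∧
    (∀ i ≤ a, ∀ j ≤ a, p i = p j → i = j) ∧
    (∀ i ≤ b, ∀ j ≤ b, q i = q j → i = j) ∧
    (∀ i ≤ c, ∀ j ≤ c, r i = r j → i = j) ∧
    (∀ i, 0 < i → i < a → ∀ j, 0 < j → j < b → p i ≠ q j) ∧
    (∀ i, 0 < i → i < a → ∀ j, 0 < j → j < c → p i ≠ r j) ∧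
    (∀ i, 0 < i → i < b → ∀ j, 0 < j → j < c → q i ≠ r j) ∧
    (∀ u v, E u v ↔
      ((∃ i < a, (p i = u ∧ p (i + 1) = v) ∨ (p i = v ∧ p (i + 1) = u)) ∨
       (∃ i < b, (q i = u ∧ q (i + 1) = v) ∨ (q i = v ∧ q (i + 1) = u)) ∨
       (∃ i < c, (r i = u ∧ r (i + 1) = v) ∨ (r i = v ∧ r (i + 1) = u))))


/-- cumulative xor of `f 0, …, f (n-1)`. -/
def cumXor (f : ℕ → Bool) : ℕ → Bool
  | 0 => false
  | n+1 => Bool.xor (cumXor f n) (f n)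

/-- explicit proper walk in `K₃` of length `m` from colour 0 to colour 1. -/
def col (m i : ℕ) : Fin 3 := if i = m then 1 else if i % 2 = 0 then 0 else 2

lemma col_self (m : ℕ) : col m m = 1 := by simp [col]

lemma col_zero {m : ℕ} (hm : 1 ≤ m) : col m 0 = 0 := by
  unfold col
  rw [if_neg (by omega), if_pos (by norm_num)]

lemma col_step {m i : ℕ} (h : i + 1 ≤ m) : col m i ≠ col m (i+1) := by
  unfold col
  rcases eq_or_lt_of_le h with he | hl
  · rw [if_neg (by omega), if_pos he]
    split <;> decide
  · by_cases hp : i % 2 = 0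
    · simp [show i ≠ m by omega, show i + 1 ≠ m by omega, hp,
        show (i+1) % 2 = 1 by omega]
    · simp [show i ≠ m by omega, show i + 1 ≠ m by omega, hp,
        show (i+1) % 2 = 0 by omega]

lemma pathLemma (n : ℕ) (hn : 1 ≤ n) (f : ℕ → Bool) (t : Bool) (S : ℕ → Bool) (C : ℕ → Fin 3)
    (m : ℕ) (hm : m = if cumXor f n = t then n else n - 1)
    (hn1 : n = 1 → cumXor f n = t)
    (hS : ∀ i < n, S i = cumXor f i) (hSn : S n = t)
    (hC : ∀ i < n, C i = col m i) (hCn : C n = 1) :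
    ∀ i < n, (Bool.xor (f i) (S i != S (i+1)) = true ↔ C i = C (i+1)) := by
  have hmn : n - 1 ≤ m := by rw [hm]; split <;> omega
  have hm1 : 1 ≤ m := by
    by_cases h1 : n = 1
    · rw [hm, if_pos (hn1 h1)]; omega
    · omega
  intro i hi
  by_cases hlast : i + 1 = n
  · -- last edge of the path
    rw [hS i hi, (show S (i+1) = t by rw [hlast]; exact hSn),
        (show C (i+1) = 1 by rw [hlast]; exact hCn), hC i hi]
    have hε : cumXor f n = Bool.xor (cumXor f i) (f i) := by rw [← hlast]; rfl
    by_cases hEq : cumXor f n = t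
    · have hmn' : m = n := by rw [hm, if_pos hEq]
      have hlhs : (Bool.xor (f i) (cumXor f i != t)) = false := by
        rw [← hEq, hε]
        cases cumXor f i <;> cases f i <;> rfl
      rw [hlhs]
      refine iff_of_false (by simp) ?_
      have h2 := col_step (m := m) (i := i) (by omega)
      rw [(show col m (i+1) = 1 by rw [hlast, ← hmn']; exact col_self m)] at h2
      exact h2
    · have hne : n ≠ 1 := fun h => hEq (hn1 h)
      have hmn' : m = n - 1 := by rw [hm, if_neg hEq]
      have him : i = m := by omega
      have hlhs : (Bool.xor (f i) (cumXor f i != t)) = true := by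
        have h3 : Bool.xor (cumXor f i) (f i) ≠ t := by rw [← hε]; exact hEq
        revert h3; cases cumXor f i <;> cases f i <;> cases t <;> simp
      rw [hlhs, him, col_self]
      simp
  · -- internal edge: switched sign is positive
    have hi1 : i + 1 < n := by omega
    rw [hS i hi, hS (i+1) hi1, hC i hi, hC (i+1) hi1]
    have hb : (cumXor f i != cumXor f (i+1)) = f i := by
      show (cumXor f i != Bool.xor (cumXor f i) (f i)) = f i
      cases cumXor f i <;> cases f i <;> rfl
    rw [hb]
    refine iff_of_false (by cases f i <;> simp) (col_step (by omega))

/-- Every signed theta graph admits a homomorphism to `C₃*`. -/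
theorem signed_theta_hasHomTo_C3star {V : Type*} (G : SignedGraph V)
    (hsigned : ∀ u v, ¬ (G.pos u v ∧ G.neg u v))
    (htheta : IsThetaGraph (fun u v => G.pos u v ∨ G.neg u v)) :
    G.HasHomTo C3star := by
  classical
  obtain ⟨a, b, c, p, q, r, ha, hb, hc, hab, hac, hbc, hpq0, hqr0, hpqa, hqra, hpne,
    hpinj, hqinj, hrinj, hPQ, hPR, hQR, hEiff⟩ := htheta
  have hq0 : q 0 = p 0 := hpq0.symm
  have hr0 : r 0 = p 0 := by rw [← hqr0]; exact hq0
  have hqb : q b = p a := hpqa.symm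
  have hrc : r c = p a := by rw [← hqra]; exact hqb
  set fp : ℕ → Bool := fun i => decide (G.neg (p i) (p (i+1))) with hfp
  set fq : ℕ → Bool := fun i => decide (G.neg (q i) (q (i+1))) with hfq
  set fr : ℕ → Bool := fun i => decide (G.neg (r i) (r (i+1))) with hfr
  set t : Bool := if a = 1 then cumXor fp a else if b = 1 then cumXor fq b
    else if c = 1 then cumXor fr c else false with ht
  set mp : ℕ := if cumXor fp a = t then a else a - 1 with hmp
  set mq : ℕ := if cumXor fq b = t then b else b - 1 with hmq
  set mr : ℕ := if cumXor fr c = t then c else c - 1 with hmr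
  set s : V → Bool := fun v =>
    if v = p 0 then false
    else if v = p a then t
    else if h : ∃ i, 0 < i ∧ i < a ∧ p i = v then cumXor fp h.choose
    else if h : ∃ j, 0 < j ∧ j < b ∧ q j = v then cumXor fq h.choose
    else if h : ∃ k, 0 < k ∧ k < c ∧ r k = v then cumXor fr h.choose
    else false with hsdef
  set φ : V → Fin 3 := fun v =>
    if v = p 0 then 0
    else if v = p a then 1
    else if h : ∃ i, 0 < i ∧ i < a ∧ p i = v then col mp h.choose
    else if h : ∃ j, 0 < j ∧ j < b ∧ q j = v then col mq h.choose
    else if h : ∃ k, 0 < k ∧ k < c ∧ r k = v then col mr h.choose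
    else 0 with hφdef
  -- internal vertices differ from the ends
  have hpx : ∀ i, 0 < i → i < a → p i ≠ p 0 := fun i h1 h2 e => by
    have := hpinj i (by omega) 0 (by omega) e; omega
  have hpy : ∀ i, i < a → p i ≠ p a := fun i h2 e => by
    have := hpinj i (by omega) a (le_refl a) e; omega
  have hqx : ∀ j, 0 < j → j < b → q j ≠ p 0 := fun j h1 h2 e => by
    rw [← hq0] at e; have := hqinj j (by omega) 0 (by omega) e; omega
  have hqy : ∀ j, j < b → q j ≠ p a := fun j h2 e => by
    rw [← hqb] at e; have := hqinj j (by omega) b (le_refl b) e; omega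
  have hrx : ∀ k, 0 < k → k < c → r k ≠ p 0 := fun k h1 h2 e => by
    rw [← hr0] at e; have := hrinj k (by omega) 0 (by omega) e; omega
  have hry : ∀ k, k < c → r k ≠ p a := fun k h2 e => by
    rw [← hrc] at e; have := hrinj k (by omega) c (le_refl c) e; omega
  -- evaluation of s
  have hyx : p a ≠ p 0 := fun e => hpne e.symm
  have hs0 : s (p 0) = false := by simp [hsdef]
  have hsy : s (p a) = t := by simp [hsdef, hyx]
  have hsP : ∀ i, 0 < i → i < a → s (p i) = cumXor fp i := by
    intro i h1 h2
    have hw : ∃ j, 0 < j ∧ j < a ∧ p j = p i := ⟨i, h1, h2, rfl⟩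
    simp only [hsdef]
    rw [if_neg (hpx i h1 h2), if_neg (hpy i h2), dif_pos hw]
    obtain ⟨hw1, hw2, hw3⟩ := hw.choose_spec
    rw [hpinj _ hw2.le _ h2.le hw3]
  have hsQ : ∀ j, 0 < j → j < b → s (q j) = cumXor fq j := by
    intro j h1 h2
    have hw : ∃ k, 0 < k ∧ k < b ∧ q k = q j := ⟨j, h1, h2, rfl⟩
    have hnp : ¬ ∃ i, 0 < i ∧ i < a ∧ p i = q j := by
      rintro ⟨i, hi1, hi2, he⟩; exact hPQ i hi1 hi2 j h1 h2 he
    simp only [hsdef]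
    rw [if_neg (hqx j h1 h2), if_neg (hqy j h2), dif_neg hnp, dif_pos hw]
    obtain ⟨hw1, hw2, hw3⟩ := hw.choose_spec
    rw [hqinj _ hw2.le _ h2.le hw3]
  have hsR : ∀ k, 0 < k → k < c → s (r k) = cumXor fr k := by
    intro k h1 h2
    have hw : ∃ l, 0 < l ∧ l < c ∧ r l = r k := ⟨k, h1, h2, rfl⟩
    have hnp : ¬ ∃ i, 0 < i ∧ i < a ∧ p i = r k := by
      rintro ⟨i, hi1, hi2, he⟩; exact hPR i hi1 hi2 k h1 h2 he
    have hnq : ¬ ∃ j, 0 < j ∧ j < b ∧ q j = r k := by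
      rintro ⟨j, hj1, hj2, he⟩; exact hQR j hj1 hj2 k h1 h2 he
    simp only [hsdef]
    rw [if_neg (hrx k h1 h2), if_neg (hry k h2), dif_neg hnp, dif_neg hnq, dif_pos hw]
    obtain ⟨hw1, hw2, hw3⟩ := hw.choose_spec
    rw [hrinj _ hw2.le _ h2.le hw3]
  -- evaluation of φ
  have hφ0 : φ (p 0) = 0 := by simp [hφdef]
  have hφy : φ (p a) = 1 := by simp [hφdef, hyx]
  have hφP : ∀ i, 0 < i → i < a → φ (p i) = col mp i := by
    intro i h1 h2
    have hw : ∃ j, 0 < j ∧ j < a ∧ p j = p i := ⟨i, h1, h2, rfl⟩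
    simp only [hφdef]
    rw [if_neg (hpx i h1 h2), if_neg (hpy i h2), dif_pos hw]
    obtain ⟨hw1, hw2, hw3⟩ := hw.choose_spec
    rw [hpinj _ hw2.le _ h2.le hw3]
  have hφQ : ∀ j, 0 < j → j < b → φ (q j) = col mq j := by
    intro j h1 h2
    have hw : ∃ k, 0 < k ∧ k < b ∧ q k = q j := ⟨j, h1, h2, rfl⟩
    have hnp : ¬ ∃ i, 0 < i ∧ i < a ∧ p i = q j := by
      rintro ⟨i, hi1, hi2, he⟩; exact hPQ i hi1 hi2 j h1 h2 he
    simp only [hφdef]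
    rw [if_neg (hqx j h1 h2), if_neg (hqy j h2), dif_neg hnp, dif_pos hw]
    obtain ⟨hw1, hw2, hw3⟩ := hw.choose_spec
    rw [hqinj _ hw2.le _ h2.le hw3]
  have hφR : ∀ k, 0 < k → k < c → φ (r k) = col mr k := by
    intro k h1 h2
    have hw : ∃ l, 0 < l ∧ l < c ∧ r l = r k := ⟨k, h1, h2, rfl⟩
    have hnp : ¬ ∃ i, 0 < i ∧ i < a ∧ p i = r k := by
      rintro ⟨i, hi1, hi2, he⟩; exact hPR i hi1 hi2 k h1 h2 he
    have hnq : ¬ ∃ j, 0 < j ∧ j < b ∧ q j = r k := by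
      rintro ⟨j, hj1, hj2, he⟩; exact hQR j hj1 hj2 k h1 h2 he
    simp only [hφdef]
    rw [if_neg (hrx k h1 h2), if_neg (hry k h2), dif_neg hnp, dif_neg hnq, dif_pos hw]
    obtain ⟨hw1, hw2, hw3⟩ := hw.choose_spec
    rw [hrinj _ hw2.le _ h2.le hw3]
  -- the choice of t
  have htp : a = 1 → cumXor fp a = t := fun h => by rw [ht, if_pos h]
  have htq : b = 1 → cumXor fq b = t := fun h => by
    rw [ht, if_neg (fun h' => hab h' h), if_pos h]
  have htr : c = 1 → cumXor fr c = t := fun h => by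
    rw [ht, if_neg (fun h' => hac h' h), if_neg (fun h' => hbc h' h), if_pos h]
  have hmp1 : 1 ≤ mp := by
    by_cases h1 : a = 1
    · rw [hmp, if_pos (htp h1)]; omega
    · rw [hmp]; split <;> omega
  have hmq1 : 1 ≤ mq := by
    by_cases h1 : b = 1
    · rw [hmq, if_pos (htq h1)]; omega
    · rw [hmq]; split <;> omega
  have hmr1 : 1 ≤ mr := by
    by_cases h1 : c = 1
    · rw [hmr, if_pos (htr h1)]; omega
    · rw [hmr]; split <;> omega
  -- the three path lemmas
  have Pp : ∀ i < a, (Bool.xor (fp i) (s (p i) != s (p (i+1))) = true ↔ φ (p i) = φ (p (i+1))) := by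
    refine pathLemma a ha fp t (fun i => s (p i)) (fun i => φ (p i)) mp hmp htp ?_ hsy ?_ hφy
    · intro i hi
      rcases Nat.eq_zero_or_pos i with h0 | h0
      · subst h0; show s (p 0) = _; rw [hs0]; rfl
      · exact hsP i h0 hi
    · intro i hi
      rcases Nat.eq_zero_or_pos i with h0 | h0
      · subst h0; show φ (p 0) = _; rw [hφ0, col_zero hmp1]
      · exact hφP i h0 hi
  have Pq : ∀ j < b, (Bool.xor (fq j) (s (q j) != s (q (j+1))) = true ↔ φ (q j) = φ (q (j+1))) := by
    refine pathLemma b hb fq t (fun j => s (q j)) (fun j => φ (q j)) mq hmq htq ?_ ?_ ?_ ?_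
    · intro j hj
      rcases Nat.eq_zero_or_pos j with h0 | h0
      · subst h0; show s (q 0) = _; rw [hq0, hs0]; rfl
      · exact hsQ j h0 hj
    · show s (q b) = t; rw [hqb]; exact hsy
    · intro j hj
      rcases Nat.eq_zero_or_pos j with h0 | h0
      · subst h0; show φ (q 0) = _; rw [hq0, hφ0, col_zero hmq1]
      · exact hφQ j h0 hj
    · show φ (q b) = 1; rw [hqb]; exact hφy
  have Pr : ∀ k < c, (Bool.xor (fr k) (s (r k) != s (r (k+1))) = true ↔ φ (r k) = φ (r (k+1))) := by
    refine pathLemma c hc fr t (fun k => s (r k)) (fun k => φ (r k)) mr hmr htr ?_ ?_ ?_ ?_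
    · intro k hk
      rcases Nat.eq_zero_or_pos k with h0 | h0
      · subst h0; show s (r 0) = _; rw [hr0, hs0]; rfl
      · exact hsR k h0 hk
    · show s (r c) = t; rw [hrc]; exact hsy
    · intro k hk
      rcases Nat.eq_zero_or_pos k with h0 | h0
      · subst h0; show φ (r 0) = _; rw [hr0, hφ0, col_zero hmr1]
      · exact hφR k h0 hk
    · show φ (r c) = 1; rw [hrc]; exact hφy
  -- master edge lemma
  have hbne : ∀ x y : Bool, (x != y) = (y != x) := by decide
  have hsym : ∀ u' v' : V, decide (G.neg u' v') = decide (G.neg v' u') :=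
    fun u' v' => decide_eq_decide.mpr ⟨fun h => G.neg_symm h, fun h => G.neg_symm h⟩
  have hMaster : ∀ u v, G.pos u v ∨ G.neg u v →
      (Bool.xor (decide (G.neg u v)) (s u != s v) = true ↔ φ u = φ v) := by
    intro u v he
    have hEdge := (hEiff u v).mp he
    rcases hEdge with ⟨i, hi, ⟨h1, h2⟩ | ⟨h1, h2⟩⟩ | ⟨i, hi, ⟨h1, h2⟩ | ⟨h1, h2⟩⟩ |
      ⟨i, hi, ⟨h1, h2⟩ | ⟨h1, h2⟩⟩
    · subst h1; subst h2
      rw [show decide (G.neg (p i) (p (i+1))) = fp i from by rw [hfp]]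
      exact Pp i hi
    · subst h1; subst h2
      rw [hsym (p (i+1)) (p i), hbne (s (p (i+1))) (s (p i)),
        show decide (G.neg (p i) (p (i+1))) = fp i from by rw [hfp]]
      exact (Pp i hi).trans eq_comm
    · subst h1; subst h2
      rw [show decide (G.neg (q i) (q (i+1))) = fq i from by rw [hfq]]
      exact Pq i hi
    · subst h1; subst h2
      rw [hsym (q (i+1)) (q i), hbne (s (q (i+1))) (s (q i)),
        show decide (G.neg (q i) (q (i+1))) = fq i from by rw [hfq]]
      exact (Pq i hi).trans eq_comm
    · subst h1; subst h2
      rw [show decide (G.neg (r i) (r (i+1))) = fr i from by rw [hfr]]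
      exact Pr i hi
    · subst h1; subst h2
      rw [hsym (r (i+1)) (r i), hbne (s (r (i+1))) (s (r i)),
        show decide (G.neg (r i) (r (i+1))) = fr i from by rw [hfr]]
      exact (Pr i hi).trans eq_comm
  refine ⟨s, φ, fun u v h => ?_, fun u v h => ?_⟩
  · have h' : (if s u = s v then G.pos u v else G.neg u v) := h
    show φ u ≠ φ v
    by_cases hs : s u = s v
    · rw [if_pos hs] at h'
      intro he
      have hx := (hMaster u v (Or.inl h')).mpr he
      rw [decide_eq_false (fun hn => hsigned u v ⟨h', hn⟩), hs] at hx
      simp at hx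
    · rw [if_neg hs] at h'
      intro he
      have hx := (hMaster u v (Or.inr h')).mpr he
      rw [decide_eq_true h', bne_iff_ne.mpr hs] at hx
      simp at hx
  · have h' : (if s u = s v then G.neg u v else G.pos u v) := h
    show φ u = φ v
    by_cases hs : s u = s v
    · rw [if_pos hs] at h'
      refine (hMaster u v (Or.inr h')).mp ?_
      rw [decide_eq_true h', hs]
      simp
    · rw [if_neg hs] at h'
      refine (hMaster u v (Or.inl h')).mp ?_
      rw [decide_eq_false (fun hn => hsigned u v ⟨h', hn⟩), bne_iff_ne.mpr hs]
      simp
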